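/- Proposition 1 (monotonicity of the non-cognitive signal): Suppose sender optimality holds for a reasonable wage function ŵ : C → ℝ, and suppose m̂₂(t) ≤ m₂° for all t ∈ T. Then the non-cognitive strategy m̂₂ is nonincreasing on T: for all t, t' ∈ T with t < t', m̂₂(t) ≥ m̂₂(t'). -/

import Mathlib

open Set

/-- Proposition 1 (monotonicity of the non-cognitive signal): under sender optimality for a
reasonable wage function, the non-cognitive strategy `m2` is nonincreasing on `[tl, th]`. -/
theorem noncognitive_signal_nonincreasing
    (tl th M α m2o : ℝ) (c : ℝ → ℝ → ℝ) (h : ℝ → ℝ)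
    (m1 m2 : ℝ → ℝ) (w : ℝ → ℝ → ℝ)
    (htl : 0 < tl) (htlth : tl < th) (hM : 0 < M) (hα : 0 ≤ α)
    -- strict single crossing property of c
    (hsc : ∀ a a' t t', a > a' → 0 ≤ a' → t ∈ Icc tl th → t' ∈ Icc tl th → t > t' →
      c a t + c a' t' < c a t' + c a' t)
    -- strict convexity of h
    (hconv : StrictConvexOn ℝ (Ici 0) h)
    -- m2o is the unique maximizer of m ↦ α⬝m − h m over ℝ≥0, with 0 < m2o < M
    (hm2o : 0 < m2o ∧ m2o < M)
    (hmax : ∀ m, 0 ≤ m → m ≠ m2o → α * m - h m < α * m2o - h m2o)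
    -- feasibility of the strategies
    (hfeas : ∀ t ∈ Icc tl th, 0 ≤ m1 t ∧ 0 ≤ m2 t ∧ m1 t + m2 t ≤ M)
    -- sender optimality
    (hopt : ∀ t ∈ Icc tl th, ∀ p q : ℝ, 0 ≤ p → 0 ≤ q → p + q ≤ M →
      w p q - h q - c p t ≤ w (m1 t) (m2 t) - h (m2 t) - c (m1 t) t)
    -- the wage function is reasonable
    (hreas : ∀ a q q' : ℝ, 0 ≤ a → 0 ≤ q → a + q < M → 0 ≤ q' → a + q' < M →
      w a q - w a q' = α * (q - q'))
    -- the bound on the non-cognitive signal derived from optimality and convexity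
    (hbound : ∀ t ∈ Icc tl th, m2 t ≤ m2o) :
    ∀ t ∈ Icc tl th, ∀ t' ∈ Icc tl th, t < t' → m2 t' ≤ m2 t := by
  intro t ht t' ht' htt'
  by_contra hlt
  push_neg at hlt
  have gmono : ∀ x y : ℝ, 0 ≤ x → x < y → y ≤ m2o → α * x - h x < α * y - h y := by
    intro x y hx hxy hym
    rcases eq_or_lt_of_le hym with rfl | hym'
    · exact hmax x hx (ne_of_lt hxy)
    · have hgx : α * x - h x < α * m2o - h m2o := hmax x hx (by linarith)
      have hden : 0 < m2o - x := by linarith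
      have hl : 0 < (m2o - y) / (m2o - x) := div_pos (by linarith) hden
      have hu : 0 < (y - x) / (m2o - x) := div_pos (by linarith) hden
      have hsum : (m2o - y) / (m2o - x) + (y - x) / (m2o - x) = 1 := by
        field_simp
        ring
      have hconvx := hconv.2 (show x ∈ Ici (0:ℝ) from hx)
        (show m2o ∈ Ici (0:ℝ) from le_of_lt hm2o.1)
        (ne_of_lt (by linarith)) hl hu hsum
      simp only [smul_eq_mul] at hconvx
      have hyeq : (m2o - y) / (m2o - x) * x + (y - x) / (m2o - x) * m2o = y := by
        field_simp
        ring
      rw [hyeq] at hconvx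
      have hclean : h y * (m2o - x) < (m2o - y) * h x + (y - x) * h m2o := by
        calc h y * (m2o - x)
            < ((m2o - y) / (m2o - x) * h x + (y - x) / (m2o - x) * h m2o) * (m2o - x) :=
              mul_lt_mul_of_pos_right hconvx hden
          _ = (m2o - y) * h x + (y - x) * h m2o := by field_simp
      nlinarith [hclean, hden, mul_lt_mul_of_pos_left hgx (show (0:ℝ) < y - x by linarith)]
  have hft := hfeas t ht
  have hft' := hfeas t' ht'
  have hm2t_lt : m2 t < m2o := lt_of_lt_of_le hlt (hbound t' ht')
  have hbind : m1 t + m2 t = M := by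
    by_contra hne
    have hlt2 : m1 t + m2 t < M := lt_of_le_of_ne hft.2.2 hne
    have hq1 : m2 t < min m2o ((m2 t + (M - m1 t)) / 2) := lt_min hm2t_lt (by linarith)
    have hq2 : min m2o ((m2 t + (M - m1 t)) / 2) ≤ m2o := min_le_left _ _
    have hq3 : m1 t + min m2o ((m2 t + (M - m1 t)) / 2) < M := by
      have := min_le_right m2o ((m2 t + (M - m1 t)) / 2)
      linarith
    have hq0 : 0 ≤ min m2o ((m2 t + (M - m1 t)) / 2) := le_trans hft.2.1 (le_of_lt hq1)
    have hdev := hopt t ht (m1 t) (min m2o ((m2 t + (M - m1 t)) / 2)) hft.1 hq0 (le_of_lt hq3)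
    have hw := hreas (m1 t) (min m2o ((m2 t + (M - m1 t)) / 2)) (m2 t) hft.1 hq0 hq3 hft.2.1 hlt2
    have hg := gmono (m2 t) (min m2o ((m2 t + (M - m1 t)) / 2)) hft.2.1 hq1 hq2
    linarith
  have hm1 : m1 t' < m1 t := by linarith [hft'.2.2]
  have h1 := hopt t ht (m1 t') (m2 t') hft'.1 hft'.2.1 hft'.2.2
  have h2 := hopt t' ht' (m1 t) (m2 t) hft.1 hft.2.1 hft.2.2
  have hscc := hsc (m1 t) (m1 t') t' t hm1 hft'.1 ht' ht htt'
  linarith
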